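/- Let S be a set of primes and for z > e let S_z = {p ∈ S : p ≤ z}. Assume that the sum of 1/p over p ∈ S_z is at most β·log log z + C for some constants β, C > 0. Let N_z denote the set of positive integers all of whose prime factors lie in S_z. Then for every η ≥ 1, the sum of 1/n over n ∈ N_z with ω(n) ≥ η·β·log log z is at most a constant (depending only on C and η) times (log z)^{β(η − η log η)}. -/

import Mathlib

open Classical Real in
private lemma tele_sum (P : Finset ℕ) (hP : ∀ p ∈ P, 2 ≤ p) :
    ∑ p ∈ P, ((1:ℝ)/((p:ℝ)-1) - 1/p) ≤ 1 := by
  have key : ∀ N : ℕ, 1 ≤ N → ∑ n ∈ Finset.Icc 2 N, ((1:ℝ)/((n:ℝ)-1) - 1/n) = 1 - 1/N := by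
    intro N hN
    induction N, hN using Nat.le_induction with
    | base => simp
    | succ N hN ih =>
      rw [Finset.sum_Icc_succ_top (by omega), ih]
      have hN0 : (N:ℝ) ≠ 0 := Nat.cast_ne_zero.mpr (by omega)
      have hN1 : (N:ℝ) + 1 ≠ 0 := by positivity
      push_cast
      field_simp
      ring_nf
      rw [mul_inv_cancel₀ hN0, pow_two, mul_assoc, mul_inv_cancel₀ hN0]
      ring
  rcases P.eq_empty_or_nonempty with rfl | hne
  · simp
  · set N := P.sup id with hNdef
    have hN1 : 1 ≤ N := by
      obtain ⟨p, hp⟩ := hne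
      have := hP p hp
      have : p ≤ N := Finset.le_sup (f := id) hp
      omega
    have hsub : P ⊆ Finset.Icc 2 N := by
      intro p hp
      exact Finset.mem_Icc.mpr ⟨hP p hp, Finset.le_sup (f := id) hp⟩
    have hnn : ∀ n ∈ Finset.Icc 2 N, n ∉ P → 0 ≤ (1:ℝ)/((n:ℝ)-1) - 1/n := by
      intro n hn _
      have h2 : 2 ≤ n := (Finset.mem_Icc.mp hn).1
      have h2' : (2:ℝ) ≤ (n:ℝ) := by exact_mod_cast h2
      have h1 : (0:ℝ) < (n:ℝ) - 1 := by linarith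
      have h0 : (0:ℝ) < (n:ℝ) := by linarith
      have : (1:ℝ)/(n:ℝ) ≤ 1/((n:ℝ)-1) := by
        apply one_div_le_one_div_of_le h1; linarith
      linarith
    calc ∑ p ∈ P, ((1:ℝ)/((p:ℝ)-1) - 1/p)
        ≤ ∑ n ∈ Finset.Icc 2 N, ((1:ℝ)/((n:ℝ)-1) - 1/n) :=
          Finset.sum_le_sum_of_subset_of_nonneg hsub hnn
      _ = 1 - 1/N := key N hN1
      _ ≤ 1 := by
          have : (0:ℝ) ≤ 1/(N:ℝ) := by positivity
          linarith

open Classical Real in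
private lemma prod_bound (η : ℝ) (hη : 0 ≤ η) (P : Finset ℕ) (hP : ∀ p ∈ P, Nat.Prime p) :
    ∏ p ∈ P, (1 + η/((p:ℝ)-1)) ≤ Real.exp (η * ((∑ p ∈ P, (1:ℝ)/p) + 1)) := by
  have h1 : ∏ p ∈ P, (1 + η/((p:ℝ)-1)) ≤ ∏ p ∈ P, Real.exp (η/((p:ℝ)-1)) := by
    apply Finset.prod_le_prod
    · intro p hp
      have h2 : (2:ℝ) ≤ (p:ℝ) := by exact_mod_cast (hP p hp).two_le
      have : (0:ℝ) < (p:ℝ) - 1 := by linarith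
      positivity
    · intro p hp
      have := Real.add_one_le_exp (η/((p:ℝ)-1))
      linarith
  rw [← Real.exp_sum] at h1
  refine h1.trans (Real.exp_le_exp.mpr ?_)
  have h2 : ∑ p ∈ P, η/((p:ℝ)-1) = η * ∑ p ∈ P, (1:ℝ)/((p:ℝ)-1) := by
    rw [Finset.mul_sum]; apply Finset.sum_congr rfl; intro p _; ring
  rw [h2]
  have h3 : ∑ p ∈ P, (1:ℝ)/((p:ℝ)-1) ≤ (∑ p ∈ P, (1:ℝ)/p) + 1 := by
    have := tele_sum P (fun p hp => (hP p hp).two_le)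
    have heq : ∑ p ∈ P, (1:ℝ)/((p:ℝ)-1) =
        (∑ p ∈ P, (1:ℝ)/p) + ∑ p ∈ P, ((1:ℝ)/((p:ℝ)-1) - 1/p) := by
      rw [← Finset.sum_add_distrib]; apply Finset.sum_congr rfl; intro p _; ring
    rw [heq]; linarith
  exact mul_le_mul_of_nonneg_left h3 hη

open Classical Real in
private lemma geom_bound (η : ℝ) (hη : 1 ≤ η) {q : ℕ} (hq : q.Prime) (A : Finset ℕ) :
    ∑ a ∈ A, η ^ (min a 1) / (q:ℝ) ^ a ≤ 1 + η / ((q:ℝ) - 1) := by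
  have hq2 : (2:ℝ) ≤ (q:ℝ) := by exact_mod_cast hq.two_le
  have hq0 : (0:ℝ) < (q:ℝ) := by linarith
  have hq1 : (0:ℝ) < (q:ℝ) - 1 := by linarith
  have hη0 : (0:ℝ) < η := by linarith
  set B := A.sup id with hB
  have hsub : A ⊆ Finset.range (B + 1) := by
    intro a ha
    exact Finset.mem_range.mpr (Nat.lt_succ_of_le (Finset.le_sup (f := id) ha))
  have hnn : ∀ a ∈ Finset.range (B+1), a ∉ A → 0 ≤ η ^ (min a 1) / (q:ℝ) ^ a := by
    intro a _ _; positivity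
  refine (Finset.sum_le_sum_of_subset_of_nonneg hsub hnn).trans ?_
  rw [Finset.sum_range_succ' (fun a => η ^ (min a 1) / (q:ℝ) ^ a) B]
  have h0 : η ^ (min 0 1) / (q:ℝ) ^ 0 = 1 := by norm_num
  rw [h0]
  have hgeq : ∀ i : ℕ, η ^ (min (i+1) 1) / (q:ℝ) ^ (i+1) = η * ((q:ℝ)⁻¹)^(i+1) := by
    intro i
    have : min (i+1) 1 = 1 := by omega
    rw [this, pow_one, inv_pow]
    field_simp
  have hrw : ∑ i ∈ Finset.range B, η ^ (min (i+1) 1) / (q:ℝ) ^ (i+1)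
      = η * ((q:ℝ)⁻¹ * ∑ i ∈ Finset.range B, ((q:ℝ)⁻¹)^i) := by
    rw [Finset.mul_sum, Finset.mul_sum]
    apply Finset.sum_congr rfl
    intro i _
    rw [hgeq i, pow_succ']
  rw [hrw]
  have hr0 : (0:ℝ) ≤ (q:ℝ)⁻¹ := by positivity
  have hr1 : (q:ℝ)⁻¹ < 1 := by
    rw [inv_lt_one_iff₀]; right; linarith
  have hgeom : ∑ i ∈ Finset.range B, ((q:ℝ)⁻¹)^i ≤ (1 - (q:ℝ)⁻¹)⁻¹ := by
    have hsummable := summable_geometric_of_lt_one hr0 hr1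
    have := Summable.sum_le_tsum (Finset.range B) (fun i _ => by positivity) hsummable
    rwa [tsum_geometric_of_lt_one hr0 hr1] at this
  have hfin : (q:ℝ)⁻¹ * (1 - (q:ℝ)⁻¹)⁻¹ = ((q:ℝ) - 1)⁻¹ := by
    rw [← mul_inv]
    congr 1
    field_simp
  have : (q:ℝ)⁻¹ * ∑ i ∈ Finset.range B, ((q:ℝ)⁻¹)^i ≤ ((q:ℝ)-1)⁻¹ := by
    rw [← hfin]
    exact mul_le_mul_of_nonneg_left hgeom hr0
  have := mul_le_mul_of_nonneg_left this (le_of_lt hη0)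
  rw [div_eq_mul_inv η]
  linarith

open Classical Real in
private lemma rankin_prod (η : ℝ) (hη : 1 ≤ η) :
    ∀ (P : Finset ℕ), (∀ p ∈ P, Nat.Prime p) →
    ∀ (F : Finset ℕ), (∀ n ∈ F, 0 < n ∧ n.primeFactors ⊆ P) →
    ∑ n ∈ F, η ^ n.primeFactors.card / (n:ℝ) ≤ ∏ p ∈ P, (1 + η/((p:ℝ)-1)) := by
  have hη0 : (0:ℝ) < η := by linarith
  intro P
  induction P using Finset.induction_on with
  | empty =>
    intro _ F hF
    have hsub : F ⊆ {1} := by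
      intro n hn
      obtain ⟨hn0, hP⟩ := hF n hn
      have : n.primeFactors = ∅ := Finset.subset_empty.mp hP
      rcases Nat.primeFactors_eq_empty.mp this with h | h
      · omega
      · simp [h]
    calc ∑ n ∈ F, η ^ n.primeFactors.card / (n:ℝ)
        ≤ ∑ n ∈ ({1} : Finset ℕ), η ^ n.primeFactors.card / (n:ℝ) :=
          Finset.sum_le_sum_of_subset_of_nonneg hsub (fun n _ _ => by positivity)
      _ = 1 := by simp
      _ = ∏ p ∈ (∅ : Finset ℕ), (1 + η/((p:ℝ)-1)) := by simp
  | @insert q P' hq ih =>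
    intro hP F hF
    have hq' : Nat.Prime q := hP q (Finset.mem_insert_self q P')
    have hP' : ∀ p ∈ P', Nat.Prime p := fun p hp => hP p (Finset.mem_insert_of_mem hp)
    -- decomposition of each term
    have hdec : ∀ n ∈ F, η ^ n.primeFactors.card / (n:ℝ)
        = (η ^ (min (n.factorization q) 1) / (q:ℝ) ^ (n.factorization q)) *
          (η ^ (ordCompl[q] n).primeFactors.card / ((ordCompl[q] n : ℕ) : ℝ)) := by
      intro n hn
      obtain ⟨hn0, _⟩ := hF n hn
      set m : ℕ := ordCompl[q] n with hmdef
      have hmul : q ^ n.factorization q * m = n :=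
        Nat.ordProj_mul_ordCompl_eq_self n q
      have hm0 : 0 < m := Nat.ordCompl_pos q hn0.ne'
      rcases Nat.eq_zero_or_pos (n.factorization q) with h0 | hpos
      · have hmn : m = n := by
          rw [hmdef, h0, pow_zero, Nat.div_one]
        rw [h0, hmn]
        norm_num
      · have hd1 : min (n.factorization q) 1 = 1 := by omega
        have hqm : ¬ q ∣ m := Nat.not_dvd_ordCompl hq' hn0.ne'
        have hcard : n.primeFactors.card = m.primeFactors.card + 1 := by
          have h1 : n.primeFactors = insert q m.primeFactors := by
            conv_lhs => rw [← hmul]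
            rw [Nat.primeFactors_mul (pow_ne_zero _ hq'.pos.ne') hm0.ne',
              Nat.primeFactors_prime_pow (Nat.pos_iff_ne_zero.mp hpos) hq']
            rw [← Finset.insert_eq]
          rw [h1, Finset.card_insert_of_notMem]
          intro hmem
          exact hqm (Nat.dvd_of_mem_primeFactors hmem)
        have hcast : (q:ℝ) ^ (n.factorization q) * (m : ℝ) = (n:ℝ) := by
          rw [← Nat.cast_pow, ← Nat.cast_mul, hmul]
        have hqR : (0:ℝ) < (q:ℝ) := by exact_mod_cast hq'.pos
        have hmR : (0:ℝ) < (m : ℝ) := by exact_mod_cast hm0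
        rw [hcard, hd1, ← hcast, pow_succ, pow_one]
        have h1 : ((q:ℝ)) ^ (n.factorization q) ≠ 0 := by positivity
        have h2 : ((m : ℕ) : ℝ) ≠ 0 := hmR.ne'
        field_simp
    set φ : ℕ → ℕ × ℕ := fun n => (n.factorization q, ordCompl[q] n) with hφ
    have hinj : ∀ x ∈ F, ∀ y ∈ F, φ x = φ y → x = y := by
      intro x hx y hy hxy
      have h1 : x.factorization q = y.factorization q := congrArg Prod.fst hxy
      have h2 : ordCompl[q] x = ordCompl[q] y := congrArg Prod.snd hxy
      calc x = q ^ x.factorization q * ordCompl[q] x :=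
              (Nat.ordProj_mul_ordCompl_eq_self x q).symm
        _ = q ^ y.factorization q * ordCompl[q] y := by rw [h2, h1]
        _ = y := Nat.ordProj_mul_ordCompl_eq_self y q
    set A : Finset ℕ := F.image (fun n => n.factorization q) with hA
    set M : Finset ℕ := F.image (fun n => ordCompl[q] n) with hM
    have hMgood : ∀ m ∈ M, 0 < m ∧ m.primeFactors ⊆ P' := by
      intro m hm
      obtain ⟨n, hn, rfl⟩ := Finset.mem_image.mp hm
      obtain ⟨hn0, hPn⟩ := hF n hn
      have hm0 : 0 < ordCompl[q] n := Nat.ordCompl_pos q hn0.ne'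
      refine ⟨hm0, ?_⟩
      intro p hp
      have hpn : p ∈ n.primeFactors :=
        Nat.primeFactors_mono (Nat.ordCompl_dvd n q) hn0.ne' hp
      have hpins := hPn hpn
      rcases Finset.mem_insert.mp hpins with rfl | h
      · exact absurd (Nat.dvd_of_mem_primeFactors hp)
          (Nat.not_dvd_ordCompl hq' hn0.ne')
      · exact h
    calc ∑ n ∈ F, η ^ n.primeFactors.card / (n:ℝ)
        = ∑ n ∈ F, (η ^ (min ((φ n).1) 1) / (q:ℝ) ^ ((φ n).1)) *
            (η ^ ((φ n).2).primeFactors.card / (((φ n).2 : ℕ) : ℝ)) :=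
          Finset.sum_congr rfl hdec
      _ = ∑ y ∈ F.image φ, (η ^ (min y.1 1) / (q:ℝ) ^ y.1) *
            (η ^ (y.2).primeFactors.card / ((y.2 : ℕ) : ℝ)) :=
          (Finset.sum_image (f := fun y : ℕ × ℕ => (η ^ (min y.1 1) / (q:ℝ) ^ y.1) *
            (η ^ (y.2).primeFactors.card / ((y.2 : ℕ) : ℝ))) hinj).symm
      _ ≤ ∑ y ∈ A ×ˢ M, (η ^ (min y.1 1) / (q:ℝ) ^ y.1) *
            (η ^ (y.2).primeFactors.card / ((y.2 : ℕ) : ℝ)) := by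
          apply Finset.sum_le_sum_of_subset_of_nonneg
          · intro y hy
            obtain ⟨n, hn, rfl⟩ := Finset.mem_image.mp hy
            exact Finset.mem_product.mpr
              ⟨Finset.mem_image.mpr ⟨n, hn, rfl⟩, Finset.mem_image.mpr ⟨n, hn, rfl⟩⟩
          · intro y _ _; positivity
      _ = (∑ a ∈ A, η ^ (min a 1) / (q:ℝ) ^ a) *
            (∑ m ∈ M, η ^ m.primeFactors.card / (m:ℝ)) := by
          rw [Finset.sum_mul_sum]
          rw [Finset.sum_product]
      _ ≤ (1 + η/((q:ℝ)-1)) * ∏ p ∈ P', (1 + η/((p:ℝ)-1)) := by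
          apply mul_le_mul (geom_bound η hη hq' A) (ih hP' M hMgood)
          · apply Finset.sum_nonneg; intro m _; positivity
          · have hq2 : (2:ℝ) ≤ (q:ℝ) := by exact_mod_cast hq'.two_le
            have : (0:ℝ) < (q:ℝ) - 1 := by linarith
            positivity
      _ = ∏ p ∈ insert q P', (1 + η/((p:ℝ)-1)) := by
          rw [Finset.prod_insert hq]

open Classical Real in
/-- Rankin-type bound: if `∑_{p ∈ S, p ≤ z} 1/p ≤ β log log z + C`, then for `η ≥ 1`
the sum of `1/n` over integers `n` all of whose prime factors lie in `S_z`
and having `ω(n) ≥ η β log log z` is `≪_{C,η} (log z)^{β(η - η log η)}`. -/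
theorem stmt_0 (C η : ℝ) (hC : 0 < C) (hη : 1 ≤ η) :
    ∃ K : ℝ, 0 < K ∧
      ∀ (S : Set ℕ), (∀ p ∈ S, Nat.Prime p) →
      ∀ β z : ℝ, 0 < β → Real.exp 1 < z →
      (∑ p ∈ (Finset.range (⌈z⌉₊ + 1)).filter (fun p => p ∈ S ∧ (p : ℝ) ≤ z),
          (1 : ℝ) / p) ≤ β * Real.log (Real.log z) + C →
      (∑' n : {n : ℕ // 0 < n ∧ (∀ p : ℕ, p.Prime → p ∣ n → p ∈ S ∧ (p : ℝ) ≤ z) ∧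
            η * β * Real.log (Real.log z) ≤ (n.primeFactors.card : ℝ)},
          (1 : ℝ) / (n : ℕ))
        ≤ K * (Real.log z) ^ (β * (η - η * Real.log η)) := by
  have hη0 : (0:ℝ) < η := by linarith
  refine ⟨Real.exp (η * (C + 1)), Real.exp_pos _, ?_⟩
  intro S hS β z hβ hz hsum
  set L := Real.log (Real.log z) with hL
  have hz0 : (0:ℝ) < z := lt_trans (Real.exp_pos 1) hz
  have hlogz : 1 < Real.log z := by
    have := Real.log_lt_log (Real.exp_pos 1) hz
    rwa [Real.log_exp] at this
  have hlogz0 : 0 < Real.log z := by linarith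
  have hL0 : 0 < L := Real.log_pos hlogz
  have hlogη : 0 ≤ Real.log η := Real.log_nonneg hη
  set P : Finset ℕ := (Finset.range (⌈z⌉₊ + 1)).filter (fun p => p ∈ S ∧ (p : ℝ) ≤ z)
    with hPdef
  have hPprime : ∀ p ∈ P, Nat.Prime p := by
    intro p hp
    have := (Finset.mem_filter.mp hp).2.1
    exact hS p this
  -- the RHS is nonneg
  have hRHS0 : 0 ≤ Real.exp (η * (C + 1)) * (Real.log z) ^ (β * (η - η * Real.log η)) := by
    positivity
  set T := η * β * L with hT
  have hT0 : 0 ≤ T := by positivity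
  apply tsum_le_of_sum_le' hRHS0
  intro s
  -- go to a finset of naturals
  obtain ⟨F, hF⟩ : ∃ F : Finset ℕ, F = s.image Subtype.val := ⟨_, rfl⟩
  have hinj : ∀ x ∈ s, ∀ y ∈ s, (x : ℕ) = (y : ℕ) → x = y := by
    intro x _ y _ h; exact Subtype.ext h
  have hsum_eq : ∑ x ∈ s, (1:ℝ) / ((x : ℕ) : ℝ) = ∑ n ∈ F, (1:ℝ) / (n : ℝ) := by
    rw [hF]
    exact (Finset.sum_image (f := fun n : ℕ => (1:ℝ) / (n : ℝ)) hinj).symm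
  have hFprop : ∀ n ∈ F, 0 < n ∧ n.primeFactors ⊆ P ∧ T ≤ (n.primeFactors.card : ℝ) := by
    intro n hn
    rw [hF] at hn
    obtain ⟨x, _, rfl⟩ := Finset.mem_image.mp hn
    obtain ⟨hx0, hxp, hxω⟩ := x.2
    refine ⟨hx0, ?_, hxω⟩
    intro p hp
    have hpp : p.Prime := Nat.prime_of_mem_primeFactors hp
    have hpd : p ∣ (x:ℕ) := Nat.dvd_of_mem_primeFactors hp
    obtain ⟨hpS, hpz⟩ := hxp p hpp hpd
    rw [hPdef]
    refine Finset.mem_filter.mpr ⟨?_, hpS, hpz⟩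
    refine Finset.mem_range.mpr ?_
    have : (p:ℝ) ≤ (⌈z⌉₊ : ℝ) := le_trans hpz (Nat.le_ceil z)
    have : p ≤ ⌈z⌉₊ := by exact_mod_cast this
    omega
  -- per-term Rankin bound
  have hterm : ∀ n ∈ F, (1:ℝ) / (n : ℝ) ≤
      Real.exp (-(T * Real.log η)) * (η ^ n.primeFactors.card / (n:ℝ)) := by
    intro n hn
    obtain ⟨hn0, _, hω⟩ := hFprop n hn
    have hnR : (0:ℝ) < (n:ℝ) := by exact_mod_cast hn0
    have hexp : η ^ n.primeFactors.card = Real.exp ((n.primeFactors.card : ℝ) * Real.log η) := by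
      rw [← Real.rpow_natCast η n.primeFactors.card, Real.rpow_def_of_pos hη0]
      ring_nf
    have hge : Real.exp (T * Real.log η) ≤ η ^ n.primeFactors.card := by
      rw [hexp]
      apply Real.exp_le_exp.mpr
      exact mul_le_mul_of_nonneg_right hω hlogη
    have h1 : (1:ℝ) ≤ Real.exp (-(T * Real.log η)) * η ^ n.primeFactors.card := by
      calc (1:ℝ) = Real.exp (-(T * Real.log η)) * Real.exp (T * Real.log η) := by
            rw [← Real.exp_add]; simp
        _ ≤ Real.exp (-(T * Real.log η)) * η ^ n.primeFactors.card :=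
            mul_le_mul_of_nonneg_left hge (Real.exp_nonneg _)
    calc (1:ℝ) / (n:ℝ) = (1/(n:ℝ)) * 1 := by ring
      _ ≤ (1/(n:ℝ)) * (Real.exp (-(T * Real.log η)) * η ^ n.primeFactors.card) :=
          mul_le_mul_of_nonneg_left h1 (by positivity)
      _ = Real.exp (-(T * Real.log η)) * (η ^ n.primeFactors.card / (n:ℝ)) := by ring
  -- sum bound via rankin_prod and prod_bound
  have hPsum : ∑ p ∈ P, (1:ℝ)/p ≤ β * L + C := hsum
  have hmain : ∑ n ∈ F, η ^ n.primeFactors.card / (n:ℝ)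
      ≤ Real.exp (η * ((β * L + C) + 1)) := by
    calc ∑ n ∈ F, η ^ n.primeFactors.card / (n:ℝ)
        ≤ ∏ p ∈ P, (1 + η/((p:ℝ)-1)) :=
          rankin_prod η hη P hPprime F (fun n hn => ⟨(hFprop n hn).1, (hFprop n hn).2.1⟩)
      _ ≤ Real.exp (η * ((∑ p ∈ P, (1:ℝ)/p) + 1)) := prod_bound η (le_of_lt hη0) P hPprime
      _ ≤ Real.exp (η * ((β * L + C) + 1)) := by
          apply Real.exp_le_exp.mpr
          apply mul_le_mul_of_nonneg_left (by linarith) (le_of_lt hη0)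
  calc ∑ x ∈ s, (1:ℝ) / ((x : ℕ) : ℝ)
      = ∑ n ∈ F, (1:ℝ) / (n : ℝ) := hsum_eq
    _ ≤ ∑ n ∈ F, Real.exp (-(T * Real.log η)) * (η ^ n.primeFactors.card / (n:ℝ)) :=
        Finset.sum_le_sum hterm
    _ = Real.exp (-(T * Real.log η)) * ∑ n ∈ F, η ^ n.primeFactors.card / (n:ℝ) := by
        rw [Finset.mul_sum]
    _ ≤ Real.exp (-(T * Real.log η)) * Real.exp (η * ((β * L + C) + 1)) :=
        mul_le_mul_of_nonneg_left hmain (Real.exp_nonneg _)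
    _ = Real.exp (η * (C + 1)) * (Real.log z) ^ (β * (η - η * Real.log η)) := by
        rw [Real.rpow_def_of_pos hlogz0, ← Real.exp_add, ← Real.exp_add, ← hL]
        congr 1
        rw [hT]
        ring
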